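/- Let (D₁, D₂) be a chain indexed by the natural numbers in a category C, with objects D(n), morphisms q_n : D(n+1) ⟶ D(n) from D₁ and e_n : D(n) ⟶ D(n+1) from D₂, and write e_{n,m} and q_{m,n} for the composites. Let L be an object equipped with morphisms p_n : L ⟶ D(n) forming a cone over D₁ and i_n : D(n) ⟶ L forming a cocone under D₂. If L satisfies normalization (i_n ∘ p_n ∘ i_n = i_n and p_n ∘ i_n ∘ p_n = p_n for all n), then L satisfies independence: i_n ∘ p_n ∘ i_m ∘ p_m = i_m ∘ p_m ∘ i_n ∘ p_n for all n, m; in fact for n < m both sides equal i_n ∘ p_n. -/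
import Mathlib


open CategoryTheory

/-- For a cone/cocone over a chain, normalization implies independence; moreover for
`n < m` both composites `i_n ∘ p_n ∘ i_m ∘ p_m` and `i_m ∘ p_m ∘ i_n ∘ p_n`
equal `i_n ∘ p_n`. -/
theorem normalization_implies_independence {C : Type*} [Category C]
    (D : ℕ → C) (q : ∀ n, D (n + 1) ⟶ D n) (e : ∀ n, D n ⟶ D (n + 1))
    (L : C) (p : ∀ n, L ⟶ D n) (i : ∀ n, D n ⟶ L)
    (hcone : ∀ n, p n = p (n + 1) ≫ q n)
    (hcocone : ∀ n, i n = e n ≫ i (n + 1))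
    (hnorm₁ : ∀ n, i n ≫ p n ≫ i n = i n)
    (hnorm₂ : ∀ n, p n ≫ i n ≫ p n = p n) :
    (∀ n m, (p m ≫ i m) ≫ (p n ≫ i n) = (p n ≫ i n) ≫ (p m ≫ i m)) ∧
    (∀ n m, n < m →
      (p m ≫ i m) ≫ (p n ≫ i n) = p n ≫ i n ∧
      (p n ≫ i n) ≫ (p m ≫ i m) = p n ≫ i n) := by

  have hq : ∀ n m, n ≤ m → ∃ Q : D m ⟶ D n, p n = p m ≫ Q := by
    intro n m h
    induction h with
    | refl => exact ⟨𝟙 _, by simp⟩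
    | step h ih =>
      obtain ⟨Q, hQ⟩ := ih
      exact ⟨q _ ≫ Q, by rw [hQ, hcone _]; simp⟩
  have he : ∀ n m, n ≤ m → ∃ E : D n ⟶ D m, i n = E ≫ i m := by
    intro n m h
    induction h with
    | refl => exact ⟨𝟙 _, by simp⟩
    | step h ih =>
      obtain ⟨E, hE⟩ := ih
      exact ⟨E ≫ e _, by rw [hE, hcocone _]; simp⟩
  have key₁ : ∀ n m, n ≤ m → (p m ≫ i m) ≫ (p n ≫ i n) = p n ≫ i n := by
    intro n m h
    obtain ⟨Q, hQ⟩ := hq n m h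
    have h2 := hnorm₂ m
    calc (p m ≫ i m) ≫ (p n ≫ i n) = (p m ≫ i m ≫ p m) ≫ Q ≫ i n := by
          rw [hQ]; simp
      _ = p m ≫ Q ≫ i n := by rw [h2]
      _ = p n ≫ i n := by rw [hQ]; simp
  have key₂ : ∀ n m, n ≤ m → (p n ≫ i n) ≫ (p m ≫ i m) = p n ≫ i n := by
    intro n m h
    obtain ⟨E, hE⟩ := he n m h
    have h1 := hnorm₁ m
    calc (p n ≫ i n) ≫ (p m ≫ i m) = p n ≫ E ≫ (i m ≫ p m ≫ i m) := by
          rw [hE]; simp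
      _ = p n ≫ E ≫ i m := by rw [h1]
      _ = p n ≫ i n := by rw [hE]
  refine ⟨?_, fun n m h => ⟨key₁ n m h.le, key₂ n m h.le⟩⟩
  intro n m
  rcases le_total n m with h | h
  · rw [key₁ n m h, key₂ n m h]
  · rw [key₁ m n h, key₂ m n h]
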